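/- Let X be a complex Banach space, p > 0, let (I,‖·‖_I) be an l_p-ideal in B(X), let A ∈ B(X), K ∈ I, and let D(λ) = det_{p,I}(I − K(λ−A)^{-1}) for λ ∈ ρ(A) be the p-regularized perturbation determinant. Then for λ ∈ ρ(A): D(λ) = 0 if and only if λ ∈ σ(A+K). -/

import Mathlib

open scoped ENNReal

variable {X : Type*} [NormedAddCommGroup X] [NormedSpace ℂ X] [CompleteSpace X]

/-- A continuous linear operator has finite rank. -/
def IsFiniteRank (F : X →L[ℂ] X) : Prop :=
  FiniteDimensional ℂ (LinearMap.range (F : X →ₗ[ℂ] X))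

/-- `det(I - F)`, defined as the determinant of the restriction of `I - F` to the
(finite-dimensional) range of `F`. -/
noncomputable def detOneSub (F : X →L[ℂ] X) : ℂ :=
  LinearMap.det
    ((LinearMap.id : LinearMap.range (F : X →ₗ[ℂ] X) →ₗ[ℂ] LinearMap.range (F : X →ₗ[ℂ] X)) -
      (F : X →ₗ[ℂ] X).restrict fun x _ => LinearMap.mem_range_self _ x)

/-- `tr F`, the trace of the restriction of `F` to its range. -/
noncomputable def trOn (F : X →L[ℂ] X) : ℂ :=
  LinearMap.trace ℂ (LinearMap.range (F : X →ₗ[ℂ] X))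
    ((F : X →ₗ[ℂ] X).restrict fun x _ => LinearMap.mem_range_self _ x)

/-- The `p`-regularized determinant `det_p(I-F)` of a finite rank operator. -/
noncomputable def detp (p : ℝ) (F : X →L[ℂ] X) : ℂ :=
  detOneSub F * Complex.exp (∑ k ∈ Finset.Icc 1 (⌈p⌉₊ - 1), trOn (F ^ k) / (k : ℂ))

open scoped ENNReal

variable {X : Type*} [NormedAddCommGroup X] [NormedSpace ℂ X] [CompleteSpace X]

/-- The Riesz projection of `T` at `μ`, computed with the circle of radius `r` around `μ`. -/
noncomputable def rieszProjection (T : X →L[ℂ] X) (μ : ℂ) (r : ℝ) : X →L[ℂ] X :=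
  (2 * Real.pi * Complex.I)⁻¹ • ∮ z in C(μ, r), resolvent T z

/-- `μ` is a discrete eigenvalue of `T`: an isolated point of the spectrum whose
Riesz projection has finite-dimensional range. -/
def IsDiscreteEigenvalue (T : X →L[ℂ] X) (μ : ℂ) : Prop :=
  μ ∈ spectrum ℂ T ∧ ∃ r, 0 < r ∧
    (∀ z ∈ Metric.closedBall μ r, z ≠ μ → z ∉ spectrum ℂ T) ∧
    FiniteDimensional ℂ (LinearMap.range ((rieszProjection T μ r : X →L[ℂ] X) : X →ₗ[ℂ] X))

open scoped Classical in
/-- The algebraic multiplicity of `μ`: the dimension of the range of the Riesz projection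
computed with a radius isolating `μ` from the rest of the spectrum. -/
noncomputable def algebraicMultiplicity (T : X →L[ℂ] X) (μ : ℂ) : ℕ :=
  if h : ∃ r, 0 < r ∧ ∀ z ∈ Metric.closedBall μ r, z ≠ μ → z ∉ spectrum ℂ T then
    Module.finrank ℂ (LinearMap.range ((rieszProjection T μ h.choose : X →L[ℂ] X) : X →ₗ[ℂ] X))
  else 0

/-- `∑_j |λ_j(T)|^p`, the sum over the discrete eigenvalues of `T`, counted with
algebraic multiplicity (as an extended nonnegative real). -/
noncomputable def eigSum (p : ℝ) (T : X →L[ℂ] X) : ℝ≥0∞ :=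
  ∑' μ : {μ : ℂ // IsDiscreteEigenvalue T μ},
    (algebraicMultiplicity T (μ : ℂ) : ℝ≥0∞) * ENNReal.ofReal (‖(μ : ℂ)‖ ^ p)

/-- The number of discrete eigenvalues of `T` in the set `S`, counted with algebraic
multiplicity (as an extended nonnegative real). -/
noncomputable def eigCount (T : X →L[ℂ] X) (S : Set ℂ) : ℝ≥0∞ :=
  ∑' μ : {μ : ℂ // μ ∈ S ∧ IsDiscreteEigenvalue T μ},
    (algebraicMultiplicity T (μ : ℂ) : ℝ≥0∞)

/-- An `l_p`-ideal in `B(X)`: a quasi-normed subspace (with quasi-norm `norm'` and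
quasi-triangle constant `q`) of the bounded operators on `X` in which the finite rank
operators are dense (A1), whose quasi-norm dominates the operator norm (A2), which is a
two-sided ideal with submultiplicative quasi-norm (A3), and whose members have
`l_p`-summable discrete eigenvalue sequences, with eigenvalue constant `γ` (A4). -/
structure LpIdeal (p : ℝ) (X : Type*) [NormedAddCommGroup X] [NormedSpace ℂ X]
    [CompleteSpace X] where
  carrier : Set (X →L[ℂ] X)
  norm' : (X →L[ℂ] X) → ℝ
  q : ℝ
  γ : ℝ
  one_le_q : 1 ≤ q
  γ_nonneg : 0 ≤ γ
  add_mem : ∀ {K L : X →L[ℂ] X}, K ∈ carrier → L ∈ carrier → K + L ∈ carrier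
  smul_mem : ∀ (c : ℂ) {L : X →L[ℂ] X}, L ∈ carrier → c • L ∈ carrier
  norm'_nonneg : ∀ L ∈ carrier, 0 ≤ norm' L
  norm'_eq_zero_iff : ∀ L ∈ carrier, (norm' L = 0 ↔ L = 0)
  norm'_smul : ∀ L ∈ carrier, ∀ c : ℂ, norm' (c • L) = ‖c‖ * norm' L
  norm'_add_le : ∀ K ∈ carrier, ∀ L ∈ carrier, norm' (K + L) ≤ q * (norm' K + norm' L)
  finiteRank_mem : ∀ F : X →L[ℂ] X, IsFiniteRank F → F ∈ carrier
  dense_finiteRank : ∀ L ∈ carrier, ∀ ε > 0, ∃ F : X →L[ℂ] X, IsFiniteRank F ∧ norm' (L - F) < ε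
  opNorm_le : ∀ L ∈ carrier, ‖L‖ ≤ norm' L
  mul_mem : ∀ L ∈ carrier, ∀ A B : X →L[ℂ] X, A * L * B ∈ carrier
  mul_norm'_le : ∀ L ∈ carrier, ∀ A B : X →L[ℂ] X, norm' (A * L * B) ≤ ‖A‖ * norm' L * ‖B‖
  eig_le : ∀ L ∈ carrier, eigSum p L ≤ ENNReal.ofReal ((γ * norm' L) ^ p)

/-- `D` is continuous on the ideal `I` with respect to the quasi-norm of `I`. -/
def IdealContinuous {p : ℝ} (I : LpIdeal p X) (D : (X →L[ℂ] X) → ℂ) : Prop :=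
  ∀ L ∈ I.carrier, ∀ ε > 0, ∃ δ > 0, ∀ K ∈ I.carrier, I.norm' (K - L) < δ → ‖D K - D L‖ < ε

/-- `D` agrees with the `p`-regularized determinant on the finite rank operators. -/
def ExtendsDetp (p : ℝ) (D : (X →L[ℂ] X) → ℂ) : Prop :=
  ∀ F : X →L[ℂ] X, IsFiniteRank F → D F = detp p F

set_option linter.unusedSectionVars false
namespace PDaux


lemma isFiniteRank_of_le {F : X →L[ℂ] X} {V : Submodule ℂ X} [FiniteDimensional ℂ V]
    (h : LinearMap.range (F : X →ₗ[ℂ] X) ≤ V) : IsFiniteRank F :=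
  Submodule.finiteDimensional_of_le h

lemma isFiniteRank_zero : IsFiniteRank (0 : X →L[ℂ] X) := by
  have : FiniteDimensional ℂ (⊥ : Submodule ℂ X) := inferInstance
  exact isFiniteRank_of_le (V := ⊥) (by simp)

lemma isFiniteRank_mul_mul {F : X →L[ℂ] X} (hF : IsFiniteRank F) (A B : X →L[ℂ] X) :
    IsFiniteRank (A * F * B) := by
  haveI : FiniteDimensional ℂ (LinearMap.range (F : X →ₗ[ℂ] X)) := hF
  haveI : FiniteDimensional ℂ
      ((LinearMap.range (F : X →ₗ[ℂ] X)).map (A : X →ₗ[ℂ] X)) := inferInstance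
  refine isFiniteRank_of_le (V := (LinearMap.range (F : X →ₗ[ℂ] X)).map (A : X →ₗ[ℂ] X)) ?_
  rintro x ⟨y, rfl⟩
  exact ⟨F (B y), LinearMap.mem_range_self _ _, rfl⟩

lemma isFiniteRank_add {F G : X →L[ℂ] X} (hF : IsFiniteRank F) (hG : IsFiniteRank G) :
    IsFiniteRank (F + G) := by
  haveI : FiniteDimensional ℂ (LinearMap.range (F : X →ₗ[ℂ] X)) := hF
  haveI : FiniteDimensional ℂ (LinearMap.range (G : X →ₗ[ℂ] X)) := hG
  refine isFiniteRank_of_le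
    (V := LinearMap.range (F : X →ₗ[ℂ] X) ⊔ LinearMap.range (G : X →ₗ[ℂ] X)) ?_
  rintro x ⟨y, rfl⟩
  exact Submodule.add_mem_sup (LinearMap.mem_range_self _ y) (LinearMap.mem_range_self _ y)

lemma isFiniteRank_smul {F : X →L[ℂ] X} (hF : IsFiniteRank F) (c : ℂ) :
    IsFiniteRank (c • F) := by
  haveI : FiniteDimensional ℂ (LinearMap.range (F : X →ₗ[ℂ] X)) := hF
  refine isFiniteRank_of_le (V := LinearMap.range (F : X →ₗ[ℂ] X)) ?_
  rintro x ⟨y, rfl⟩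
  exact Submodule.smul_mem _ c (LinearMap.mem_range_self _ y)

lemma isFiniteRank_neg {F : X →L[ℂ] X} (hF : IsFiniteRank F) : IsFiniteRank (-F) := by
  simpa using isFiniteRank_smul hF (-1)

lemma isFiniteRank_sub {F G : X →L[ℂ] X} (hF : IsFiniteRank F) (hG : IsFiniteRank G) :
    IsFiniteRank (F - G) := by
  simpa [sub_eq_add_neg] using isFiniteRank_add hF (isFiniteRank_neg hG)

lemma isFiniteRank_smulRight (φ : X →L[ℂ] ℂ) (y : X) : IsFiniteRank (φ.smulRight y) := by
  haveI : FiniteDimensional ℂ (Submodule.span ℂ ({y} : Set X)) := inferInstance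
  refine isFiniteRank_of_le (V := Submodule.span ℂ {y}) ?_
  rintro x ⟨z, rfl⟩
  exact Submodule.smul_mem _ _ (Submodule.mem_span_singleton_self y)


/-- Restriction of `F` to a subspace containing its range. -/
noncomputable def restr (F : X →L[ℂ] X) (V : Submodule ℂ X)
    (h : LinearMap.range (F : X →ₗ[ℂ] X) ≤ V) : V →ₗ[ℂ] V :=
  (F : X →ₗ[ℂ] X).restrict (p := V) (q := V) (fun x _ => h (LinearMap.mem_range_self _ x))

@[simp] lemma restr_coe_apply (F : X →L[ℂ] X) (V : Submodule ℂ X)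
    (h : LinearMap.range (F : X →ₗ[ℂ] X) ≤ V) (x : V) :
    (restr F V h x : X) = F x := rfl

lemma trOn_def (F : X →L[ℂ] X) :
    trOn F = LinearMap.trace ℂ (LinearMap.range (F : X →ₗ[ℂ] X))
      (restr F _ le_rfl) := rfl

lemma detOneSub_def (F : X →L[ℂ] X) :
    detOneSub F = LinearMap.det (LinearMap.id - restr F _ le_rfl) := rfl

/-- Invariance of the trace: it can be computed on any finite-dimensional subspace
containing the range. -/
lemma trOn_eq_trace {F : X →L[ℂ] X} {V : Submodule ℂ X} [FiniteDimensional ℂ V]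
    (h : LinearMap.range (F : X →ₗ[ℂ] X) ≤ V) :
    trOn F = LinearMap.trace ℂ V (restr F V h) := by
  haveI : FiniteDimensional ℂ (LinearMap.range (F : X →ₗ[ℂ] X)) :=
    Submodule.finiteDimensional_of_le h
  set R := LinearMap.range (F : X →ₗ[ℂ] X)
  set f : V →ₗ[ℂ] R := LinearMap.codRestrict R ((F : X →ₗ[ℂ] X) ∘ₗ V.subtype)
    (fun x => LinearMap.mem_range_self _ _) with hf
  set g : R →ₗ[ℂ] V := Submodule.inclusion h with hg
  have h1 : g ∘ₗ f = restr F V h := by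
    ext x; rfl
  have h2 : f ∘ₗ g = restr F R le_rfl := by
    ext x; rfl
  rw [trOn_def, ← h2, ← h1, LinearMap.trace_comp_comm' f g]

lemma range_add_le' (F G : X →L[ℂ] X) :
    LinearMap.range ((F + G : X →L[ℂ] X) : X →ₗ[ℂ] X) ≤
      LinearMap.range (F : X →ₗ[ℂ] X) ⊔ LinearMap.range (G : X →ₗ[ℂ] X) := by
  rintro x ⟨y, rfl⟩
  exact Submodule.add_mem_sup (LinearMap.mem_range_self _ y) (LinearMap.mem_range_self _ y)

lemma trOn_add {F G : X →L[ℂ] X} (hF : IsFiniteRank F) (hG : IsFiniteRank G) :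
    trOn (F + G) = trOn F + trOn G := by
  haveI : FiniteDimensional ℂ (LinearMap.range (F : X →ₗ[ℂ] X)) := hF
  haveI : FiniteDimensional ℂ (LinearMap.range (G : X →ₗ[ℂ] X)) := hG
  have hFV : LinearMap.range (F : X →ₗ[ℂ] X) ≤
      LinearMap.range (F : X →ₗ[ℂ] X) ⊔ LinearMap.range (G : X →ₗ[ℂ] X) := le_sup_left
  have hGV : LinearMap.range (G : X →ₗ[ℂ] X) ≤
      LinearMap.range (F : X →ₗ[ℂ] X) ⊔ LinearMap.range (G : X →ₗ[ℂ] X) := le_sup_right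
  have hFGV := range_add_le' F G
  have hre : restr (F + G) _ hFGV = restr F _ hFV + restr G _ hGV := by
    ext x
    simp
  rw [trOn_eq_trace hFGV, hre, map_add, ← trOn_eq_trace hFV, ← trOn_eq_trace hGV]

lemma trOn_zero : trOn (0 : X →L[ℂ] X) = 0 := by
  have h : LinearMap.range ((0 : X →L[ℂ] X) : X →ₗ[ℂ] X) ≤ (⊥ : Submodule ℂ X) := by simp
  rw [trOn_eq_trace h, Subsingleton.elim (restr 0 ⊥ h)
      (0 : (⊥ : Submodule ℂ X) →ₗ[ℂ] (⊥ : Submodule ℂ X)), map_zero]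

lemma trOn_sub {F G : X →L[ℂ] X} (hF : IsFiniteRank F) (hG : IsFiniteRank G) :
    trOn (F - G) = trOn F - trOn G := by
  have h := trOn_add (isFiniteRank_sub hF hG) hG
  rw [sub_add_cancel] at h
  rw [h]; ring

lemma isFiniteRank_sum {ι : Type*} (s : Finset ι) (G : ι → (X →L[ℂ] X))
    (hG : ∀ i ∈ s, IsFiniteRank (G i)) : IsFiniteRank (∑ i ∈ s, G i) := by
  classical
  induction s using Finset.induction_on with
  | empty => simpa using isFiniteRank_zero
  | @insert a s ha ih =>
    rw [Finset.sum_insert ha]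
    exact isFiniteRank_add (hG a (Finset.mem_insert_self a s))
      (ih fun i hi => hG i (Finset.mem_insert_of_mem hi))

lemma trOn_finset_sum {ι : Type*} (s : Finset ι) (G : ι → (X →L[ℂ] X))
    (hG : ∀ i ∈ s, IsFiniteRank (G i)) :
    trOn (∑ i ∈ s, G i) = ∑ i ∈ s, trOn (G i) := by
  classical
  induction s using Finset.induction_on with
  | empty => simpa using trOn_zero
  | @insert a s ha ih =>
    rw [Finset.sum_insert ha, Finset.sum_insert ha,
      trOn_add (hG a (Finset.mem_insert_self a s))
        (isFiniteRank_sum s G fun i hi => hG i (Finset.mem_insert_of_mem hi)),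
      ih fun i hi => hG i (Finset.mem_insert_of_mem hi)]

lemma trOn_smulRight (φ : X →L[ℂ] ℂ) (y : X) : trOn (φ.smulRight y) = φ y := by
  have h : LinearMap.range ((φ.smulRight y : X →L[ℂ] X) : X →ₗ[ℂ] X) ≤
      Submodule.span ℂ ({y} : Set X) := by
    rintro x ⟨z, rfl⟩
    exact Submodule.smul_mem _ _ (Submodule.mem_span_singleton_self y)
  haveI : FiniteDimensional ℂ (Submodule.span ℂ ({y} : Set X)) := inferInstance
  rw [trOn_eq_trace h]
  have hrestr : restr (φ.smulRight y) _ h = φ y • LinearMap.id := by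
    ext v
    obtain ⟨c, hc⟩ := Submodule.mem_span_singleton.1 v.2
    have : (v : X) = c • y := hc.symm
    simp [LinearMap.restrict_apply, this, smul_smul, mul_comm]
  rw [hrestr, map_smul, LinearMap.trace_id, smul_eq_mul]
  by_cases hy : y = 0
  · subst hy
    simp
  · rw [finrank_span_singleton hy]
    simp
/-- Sylvester-type identity for linear maps. -/
lemma det_one_sub_comp_comm {V W : Type*} [AddCommGroup V] [Module ℂ V] [AddCommGroup W]
    [Module ℂ W] [FiniteDimensional ℂ V] [FiniteDimensional ℂ W]
    (f : V →ₗ[ℂ] W) (g : W →ₗ[ℂ] V) :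
    LinearMap.det (LinearMap.id - g ∘ₗ f) = LinearMap.det (LinearMap.id - f ∘ₗ g) := by
  classical
  let bV := Module.finBasis ℂ V
  let bW := Module.finBasis ℂ W
  rw [← LinearMap.det_toMatrix bV (LinearMap.id - g ∘ₗ f),
    ← LinearMap.det_toMatrix bW (LinearMap.id - f ∘ₗ g), map_sub, map_sub,
    LinearMap.toMatrix_id, LinearMap.toMatrix_id,
    LinearMap.toMatrix_comp bV bW bV g f, LinearMap.toMatrix_comp bW bV bW f g,
    Matrix.det_one_sub_mul_comm]

/-- Invariance of the determinant: it can be computed on any finite-dimensional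
subspace containing the range. -/
lemma detOneSub_eq_det {F : X →L[ℂ] X} {V : Submodule ℂ X} [FiniteDimensional ℂ V]
    (h : LinearMap.range (F : X →ₗ[ℂ] X) ≤ V) :
    detOneSub F = LinearMap.det (LinearMap.id - restr F V h) := by
  haveI : FiniteDimensional ℂ (LinearMap.range (F : X →ₗ[ℂ] X)) :=
    Submodule.finiteDimensional_of_le h
  set R := LinearMap.range (F : X →ₗ[ℂ] X)
  set f : V →ₗ[ℂ] R := LinearMap.codRestrict R ((F : X →ₗ[ℂ] X) ∘ₗ V.subtype)
    (fun x => LinearMap.mem_range_self _ _) with hf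
  set g : R →ₗ[ℂ] V := Submodule.inclusion h with hg
  have h1 : g ∘ₗ f = restr F V h := by ext x; rfl
  have h2 : f ∘ₗ g = restr F R le_rfl := by ext x; rfl
  rw [detOneSub_def, ← h2, ← h1, det_one_sub_comp_comm f g]

/-- Multiplicativity: `(1-A)(1-B) = 1 - C` gives `det (1-C) = det (1-A) det (1-B)`. -/
lemma detOneSub_mul {A B : X →L[ℂ] X} (hA : IsFiniteRank A) (hB : IsFiniteRank B) :
    detOneSub (A + B - A * B) = detOneSub A * detOneSub B := by
  haveI : FiniteDimensional ℂ (LinearMap.range (A : X →ₗ[ℂ] X)) := hA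
  haveI : FiniteDimensional ℂ (LinearMap.range (B : X →ₗ[ℂ] X)) := hB
  have hAV : LinearMap.range (A : X →ₗ[ℂ] X) ≤
      LinearMap.range (A : X →ₗ[ℂ] X) ⊔ LinearMap.range (B : X →ₗ[ℂ] X) := le_sup_left
  have hBV : LinearMap.range (B : X →ₗ[ℂ] X) ≤
      LinearMap.range (A : X →ₗ[ℂ] X) ⊔ LinearMap.range (B : X →ₗ[ℂ] X) := le_sup_right
  have hCV : LinearMap.range ((A + B - A * B : X →L[ℂ] X) : X →ₗ[ℂ] X) ≤
      LinearMap.range (A : X →ₗ[ℂ] X) ⊔ LinearMap.range (B : X →ₗ[ℂ] X) := by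
    rintro x ⟨y, rfl⟩
    have : ((A + B - A * B : X →L[ℂ] X) : X →ₗ[ℂ] X) y
        = (A y + (B y - A (B y)) : X) := by
      simp [ContinuousLinearMap.mul_apply]
      abel
    rw [this]
    exact Submodule.add_mem _ (hAV (LinearMap.mem_range_self _ y))
      (Submodule.sub_mem _ (hBV (LinearMap.mem_range_self _ y))
        (hAV (LinearMap.mem_range_self _ (B y))))
  rw [detOneSub_eq_det hCV, detOneSub_eq_det hAV, detOneSub_eq_det hBV, ← LinearMap.det_comp]
  congr 1
  ext x
  have : A ((x : X) - B x) = A x - A (B x) := map_sub A _ _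
  simp [ContinuousLinearMap.mul_apply, this]
  abel

/-- `det (1 - M) ≠ 0` iff `1 - M` is invertible, for finite rank `M`. -/
lemma detOneSub_ne_zero_iff {M : X →L[ℂ] X} (hM : IsFiniteRank M) :
    detOneSub M ≠ 0 ↔ IsUnit (1 - M) := by
  haveI : FiniteDimensional ℂ (LinearMap.range (M : X →ₗ[ℂ] X)) := hM
  set R := LinearMap.range (M : X →ₗ[ℂ] X) with hR
  set T : R →ₗ[ℂ] R := LinearMap.id - restr M R le_rfl with hT
  have hdet : detOneSub M = LinearMap.det T := rfl
  have hmem : ∀ x : X, M x ∈ R := fun x => LinearMap.mem_range_self _ x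
  have hTapp : ∀ v : R, ((T v : R) : X) = (v : X) - M v := by
    intro v
    simp [hT]
  constructor
  · intro hne
    rw [hdet] at hne
    set e := LinearMap.equivOfDetNeZero T hne with he
    have hecoe : (e : R →ₗ[ℂ] R) = T := LinearEquiv.coe_ofIsUnitDet _
    have heapp : ∀ v : R, e v = T v := fun v => by rw [← hecoe]; rfl
    set N : X →L[ℂ] X :=
      R.subtypeL.comp ((LinearMap.toContinuousLinearMap (e.symm : R →ₗ[ℂ] R)).comp
        (M.codRestrict R hmem)) with hN
    have hNapp : ∀ x : X, N x = ((e.symm ⟨M x, hmem x⟩ : R) : X) := fun x => rfl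
    refine ⟨⟨1 - M, 1 + N, ?_, ?_⟩, rfl⟩
    · ext x
      set v : R := e.symm ⟨M x, hmem x⟩ with hv
      have h3 : e v = ⟨M x, hmem x⟩ := e.apply_symm_apply _
      rw [heapp] at h3
      have hTv' : (v : X) - M v = M x := by
        have h4 := congrArg Subtype.val h3
        rwa [hTapp] at h4
      have h1 : (1 + N) x = x + (v : X) := by
        simp [ContinuousLinearMap.add_apply, hNapp, hv]
      show (1 - M) ((1 + N) x) = x
      rw [h1]
      have h5 : (1 - M) (x + (v : X)) = x + (v : X) - M (x + (v : X)) := by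
        simp [ContinuousLinearMap.sub_apply]
      rw [h5, map_add]
      have h6 : M x = (v : X) - M v := hTv'.symm
      rw [h6]
      abel
    · ext x
      have hsymm : e.symm ⟨M ((1 - M) x), hmem _⟩ = ⟨M x, hmem x⟩ := by
        rw [LinearEquiv.symm_apply_eq, heapp]
        apply Subtype.ext
        rw [hTapp]
        have hx : (1 - M) x = x - M x := by
          simp [ContinuousLinearMap.sub_apply]
        simp [hx, map_sub]
      show (1 + N) ((1 - M) x) = x
      have h1 : (1 + N) ((1 - M) x) = (1 - M) x + N ((1 - M) x) := by
        simp [ContinuousLinearMap.add_apply]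
      rw [h1, hNapp, hsymm]
      have hx : (1 - M) x = x - M x := by
        simp [ContinuousLinearMap.sub_apply]
      rw [hx]
      abel
  · intro hu
    have hinj : Function.Injective (1 - M : X →L[ℂ] X) := by
      intro a b hab
      obtain ⟨u, hu'⟩ := hu
      have h1 : (↑u⁻¹ * ↑u : X →L[ℂ] X) = 1 := u.inv_mul
      have h2 := congrArg (fun g : X →L[ℂ] X => g a) h1
      have h3 := congrArg (fun g : X →L[ℂ] X => g b) h1
      simp only [ContinuousLinearMap.mul_apply, hu', ContinuousLinearMap.one_apply] at h2 h3
      rw [← h2, ← h3, hab]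
    have hTinj : Function.Injective T := by
      intro v w hvw
      have hc := congrArg Subtype.val hvw
      rw [hTapp, hTapp] at hc
      have : (1 - M) (v : X) = (1 - M) (w : X) := by
        simpa [ContinuousLinearMap.sub_apply] using hc
      exact Subtype.ext (hinj this)
    have hTu : IsUnit T := (LinearMap.isUnit_iff_ker_eq_bot T).2 (LinearMap.ker_eq_bot.2 hTinj)
    rw [hdet]
    exact (T.isUnit_det hTu).ne_zero
lemma detOneSub_zero : detOneSub (0 : X →L[ℂ] X) = 1 := by
  have h : LinearMap.range ((0 : X →L[ℂ] X) : X →ₗ[ℂ] X) ≤ (⊥ : Submodule ℂ X) := by simp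
  rw [detOneSub_eq_det h, Subsingleton.elim (restr (0 : X →L[ℂ] X) ⊥ h) 0, sub_zero,
    LinearMap.det_id]

lemma detp_zero (p : ℝ) : detp p (0 : X →L[ℂ] X) = 1 := by
  rw [detp, detOneSub_zero]
  have : ∀ k ∈ Finset.Icc 1 (⌈p⌉₊ - 1), trOn ((0 : X →L[ℂ] X) ^ k) / (k : ℂ) = 0 := by
    intro k hk
    have hk1 : k ≠ 0 := by
      have := (Finset.mem_Icc.1 hk).1; omega
    rw [zero_pow hk1, trOn_zero, zero_div]
  rw [Finset.sum_congr rfl this, Finset.sum_const_zero, Complex.exp_zero, mul_one]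

lemma detp_eq_zero_iff (p : ℝ) (F : X →L[ℂ] X) : detp p F = 0 ↔ detOneSub F = 0 := by
  rw [detp, mul_eq_zero]
  simp [Complex.exp_ne_zero]

lemma isFiniteRank_pow {F : X →L[ℂ] X} (hF : IsFiniteRank F) {k : ℕ} (hk : k ≠ 0) :
    IsFiniteRank (F ^ k) := by
  obtain ⟨j, rfl⟩ := Nat.exists_eq_succ_of_ne_zero hk
  have := isFiniteRank_mul_mul hF (F ^ j) 1
  rwa [mul_one, ← pow_succ] at this

/-- The master factorization identity for regularized determinants of finite rank
operators. -/
lemma detp_master (p : ℝ) {F S M' : X →L[ℂ] X} (hS : IsFiniteRank S)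
    (hM : IsFiniteRank M') (hfac : F = S + M' - S * M') :
    detp p F = detp p S * detp p M' *
      Complex.exp (∑ k ∈ Finset.Icc 1 (⌈p⌉₊ - 1),
        (trOn (F ^ k) - trOn (S ^ k) - trOn (M' ^ k)) / (k : ℂ)) := by
  have hdet : detOneSub F = detOneSub S * detOneSub M' := by
    rw [hfac]; exact detOneSub_mul hS hM
  have hsum : ∑ k ∈ Finset.Icc 1 (⌈p⌉₊ - 1),
        (trOn (F ^ k) - trOn (S ^ k) - trOn (M' ^ k)) / (k : ℂ)
      = (∑ k ∈ Finset.Icc 1 (⌈p⌉₊ - 1), trOn (F ^ k) / (k : ℂ))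
        - (∑ k ∈ Finset.Icc 1 (⌈p⌉₊ - 1), trOn (S ^ k) / (k : ℂ))
        - (∑ k ∈ Finset.Icc 1 (⌈p⌉₊ - 1), trOn (M' ^ k) / (k : ℂ)) := by
    rw [← Finset.sum_sub_distrib, ← Finset.sum_sub_distrib]
    exact Finset.sum_congr rfl (fun k _ => by rw [sub_div, sub_div])
  rw [detp, detp, detp, hdet, hsum, Complex.exp_sub, Complex.exp_sub]
  have h1 := Complex.exp_ne_zero (∑ k ∈ Finset.Icc 1 (⌈p⌉₊ - 1), trOn (S ^ k) / (k : ℂ))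
  have h2 := Complex.exp_ne_zero (∑ k ∈ Finset.Icc 1 (⌈p⌉₊ - 1), trOn (M' ^ k) / (k : ℂ))
  field_simp

/-- Finite rank operators admit a rank-one decomposition giving an explicit continuous
formula for traces `tr (a F₀ c)`. -/
lemma exists_fr_decomp {F₀ : X →L[ℂ] X} (hF₀ : IsFiniteRank F₀) :
    ∃ (d : ℕ) (y : Fin d → X) (φ : Fin d → (X →L[ℂ] ℂ)),
      ∀ a c : X →L[ℂ] X, trOn (a * F₀ * c) = ∑ i, (φ i) (c (a (y i))) := by
  haveI : FiniteDimensional ℂ (LinearMap.range (F₀ : X →ₗ[ℂ] X)) := hF₀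
  set R := LinearMap.range (F₀ : X →ₗ[ℂ] X) with hR
  have hmem : ∀ x : X, F₀ x ∈ R := fun x => LinearMap.mem_range_self _ x
  set b := Module.finBasis ℂ R with hb
  set φ : Fin (Module.finrank ℂ R) → (X →L[ℂ] ℂ) := fun i =>
    (LinearMap.toContinuousLinearMap (b.coord i)).comp (F₀.codRestrict R hmem) with hφ
  refine ⟨Module.finrank ℂ R, fun i => ((b i : R) : X), φ, ?_⟩
  intro a c
  have hφapp : ∀ (i) (x : X), φ i x = b.coord i ⟨F₀ x, hmem x⟩ := fun i x => rfl
  have hdecomp : a * F₀ * c = ∑ i, ((φ i).comp c).smulRight (a ((b i : R) : X)) := by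
    ext x
    have h1 : (a * F₀ * c) x = a (F₀ (c x)) := rfl
    have h2 : (∑ i, ((φ i).comp c).smulRight (a ((b i : R) : X))) x
        = ∑ i, φ i (c x) • a ((b i : R) : X) := by
      simp [ContinuousLinearMap.sum_apply]
    rw [h1, h2]
    have h3 : ∀ i, φ i (c x) • a ((b i : R) : X) = a ((b.repr ⟨F₀ (c x), hmem _⟩ i • (b i : R) : R)) := by
      intro i
      rw [hφapp, ← map_smul]
      congr 1
    rw [Finset.sum_congr rfl (fun i _ => h3 i), ← map_sum]
    congr 1
    have h4 := b.sum_repr ⟨F₀ (c x), hmem _⟩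
    have h5 : F₀ (c x) = ((∑ i, b.repr ⟨F₀ (c x), hmem _⟩ i • b i : R) : X) := by rw [h4]
    conv_lhs => rw [h5]
    rw [AddSubmonoidClass.coe_finset_sum]
  rw [hdecomp, trOn_finset_sum _ _ (fun i _ => isFiniteRank_smulRight _ _)]
  exact Finset.sum_congr rfl fun i _ => by rw [trOn_smulRight]; rfl

/-- Telescoping identity for traces of powers. -/
lemma trOn_pow_sub_pow {F S F₀ : X →L[ℂ] X} (hF : IsFiniteRank F) (hS : IsFiniteRank S)
    (hdiff : F - S = F₀) (k : ℕ) :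
    trOn (F ^ k) - trOn (S ^ k)
      = ∑ j ∈ Finset.range k, trOn (F ^ j * F₀ * S ^ (k - 1 - j)) := by
  have h := Finset.sum_range_sub (fun j => trOn (F ^ j * S ^ (k - j))) k
  have hk : trOn (F ^ k * S ^ (k - k)) = trOn (F ^ k) := by
    rw [Nat.sub_self, pow_zero, mul_one]
  have h0 : trOn (F ^ 0 * S ^ (k - 0)) = trOn (S ^ k) := by
    rw [pow_zero, one_mul, Nat.sub_zero]
  rw [← hk, ← h0, ← h]
  refine (Finset.sum_congr rfl fun j hj => ?_).symm
  have hjk : j < k := Finset.mem_range.1 hj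
  have hc1 : k - (j + 1) = k - 1 - j := by omega
  have hc2 : k - j = (k - 1 - j) + 1 := by omega
  set c := k - 1 - j
  rw [hc1, hc2, pow_succ F j, pow_succ' S c, ← mul_assoc]
  have hA : IsFiniteRank (F ^ j * F * S ^ c) := isFiniteRank_mul_mul hF (F ^ j) (S ^ c)
  have hB : IsFiniteRank (F ^ j * S * S ^ c) := isFiniteRank_mul_mul hS (F ^ j) (S ^ c)
  rw [← trOn_sub hA hB]
  congr 1
  rw [← hdiff]
  noncomm_ring

open Filter Topology

lemma tendsto_apply₂ {Y Z : Type*} [NormedAddCommGroup Y] [NormedSpace ℂ Y]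
    [NormedAddCommGroup Z] [NormedSpace ℂ Z]
    {T : ℕ → Y →L[ℂ] Z} {T' : Y →L[ℂ] Z} {x : ℕ → Y} {x' : Y}
    (hT : Tendsto T atTop (𝓝 T')) (hx : Tendsto x atTop (𝓝 x')) :
    Tendsto (fun n => T n (x n)) atTop (𝓝 (T' x')) :=
  (isBoundedBilinearMap_apply.continuous.tendsto (T', x')).comp (hT.prodMk_nhds hx)

lemma tendsto_D {p : ℝ} {I : LpIdeal p X} {D : (X →L[ℂ] X) → ℂ}
    (hDc : IdealContinuous I D) {G : ℕ → X →L[ℂ] X} {G' : X →L[ℂ] X}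
    (hG' : G' ∈ I.carrier) (hmem : ∀ n, G n ∈ I.carrier)
    (h : Tendsto (fun n => I.norm' (G n - G')) atTop (𝓝 0)) :
    Tendsto (fun n => D (G n)) atTop (𝓝 (D G')) := by
  refine Metric.tendsto_atTop.2 fun ε hε => ?_
  obtain ⟨δ, hδpos, hδ⟩ := hDc G' hG' ε hε
  obtain ⟨N, hN⟩ := Metric.tendsto_atTop.1 h δ hδpos
  refine ⟨N, fun n hn => ?_⟩
  have h1 := hN n hn
  rw [Real.dist_eq, sub_zero] at h1
  have h2 : I.norm' (G n - G') < δ := lt_of_le_of_lt (le_abs_self _) h1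
  have := hδ (G n) (hmem n) h2
  rwa [dist_eq_norm]

/-- The crux: on the ideal, `D` vanishes exactly at non-invertibility of `1 - L`. -/
theorem crux (p : ℝ) (I : LpIdeal p X) (D : (X →L[ℂ] X) → ℂ)
    (hDc : IdealContinuous I D) (hDe : ExtendsDetp p D)
    {L : X →L[ℂ] X} (hL : L ∈ I.carrier) :
    (D L = 0 ↔ ¬ IsUnit (1 - L)) := by
  classical
  -- basic carrier facts
  have hsubmem : ∀ {P Q : X →L[ℂ] X}, P ∈ I.carrier → Q ∈ I.carrier → P - Q ∈ I.carrier := by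
    intro P Q hP hQ
    have := I.add_mem hP (I.smul_mem (-1) hQ)
    rwa [neg_one_smul, ← sub_eq_add_neg] at this
  have hnorm'_neg : ∀ {P : X →L[ℂ] X}, P ∈ I.carrier → I.norm' (-P) = I.norm' P := by
    intro P hP
    calc I.norm' (-P) = I.norm' ((-1 : ℂ) • P) := by rw [neg_one_smul]
      _ = ‖(-1 : ℂ)‖ * I.norm' P := I.norm'_smul P hP (-1)
      _ = I.norm' P := by simp
  have hq1 : (1 : ℝ) ≤ I.q := I.one_le_q
  -- continuity of D at 0
  have hD0 : D 0 = 1 := by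
    rw [hDe 0 isFiniteRank_zero, detp_zero]
  obtain ⟨δ₁, hδ₁pos, hδ₁⟩ := hDc 0 (I.finiteRank_mem 0 isFiniteRank_zero) (1/2) (by norm_num)
  -- choose F₀
  set δ₀ : ℝ := min δ₁ 1 / (4 * I.q) with hδ₀def
  have hminpos : 0 < min δ₁ 1 := lt_min hδ₁pos one_pos
  have hminle1 : min δ₁ 1 ≤ 1 := min_le_right _ _
  have hminleδ₁ : min δ₁ 1 ≤ δ₁ := min_le_left _ _
  have hδ₀pos : 0 < δ₀ := div_pos hminpos (by linarith)
  have hδ₀mul : δ₀ * (4 * I.q) = min δ₁ 1 := div_mul_cancel₀ _ (by positivity)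
  obtain ⟨F₀, hF₀fr, hF₀close⟩ := I.dense_finiteRank L hL δ₀ hδ₀pos
  have hF₀mem : F₀ ∈ I.carrier := I.finiteRank_mem F₀ hF₀fr
  set S' : X →L[ℂ] X := L - F₀ with hS'def
  have hS'mem : S' ∈ I.carrier := hsubmem hL hF₀mem
  have hS'small : I.norm' S' < δ₀ := hF₀close
  have hS'normle : ‖S'‖ ≤ I.norm' S' := I.opNorm_le S' hS'mem
  have hS'norm : ‖S'‖ < 1 := by nlinarith
  -- approximating sequence
  have hex : ∀ n : ℕ, ∃ F : X →L[ℂ] X, IsFiniteRank F ∧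
      I.norm' (L - F) < min δ₀ (1 / (n + 1)) :=
    fun n => I.dense_finiteRank L hL _ (lt_min hδ₀pos (by positivity))
  choose F hFfr hFclose using hex
  have hFmem : ∀ n, F n ∈ I.carrier := fun n => I.finiteRank_mem _ (hFfr n)
  have hFLmem : ∀ n, F n - L ∈ I.carrier := fun n => hsubmem (hFmem n) hL
  have hclose' : ∀ n, I.norm' (F n - L) < min δ₀ (1 / (n + 1)) := by
    intro n
    have h1 : F n - L = -(L - F n) := by abel
    rw [h1, hnorm'_neg (hsubmem hL (hFmem n))]
    exact hFclose n
  -- norm' (F n - L) → 0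
  have htend0 : Tendsto (fun n : ℕ => I.norm' (F n - L)) atTop (𝓝 0) := by
    apply squeeze_zero (fun n => I.norm'_nonneg _ (hFLmem n))
      (fun n => le_of_lt (lt_of_lt_of_le (hclose' n) (min_le_right _ _)))
    exact tendsto_one_div_add_atTop_nhds_zero_nat
  have hFtend : Tendsto F atTop (𝓝 L) := by
    rw [← tendsto_sub_nhds_zero_iff]
    apply squeeze_zero_norm (fun n => I.opNorm_le _ (hFLmem n)) htend0
  -- S n
  set S : ℕ → X →L[ℂ] X := fun n => F n - F₀ with hSdef
  have hSfr : ∀ n, IsFiniteRank (S n) := fun n => isFiniteRank_sub (hFfr n) hF₀fr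
  have hSmem : ∀ n, S n ∈ I.carrier := fun n => I.finiteRank_mem _ (hSfr n)
  have hSsub : ∀ n, S n - S' = F n - L := by intro n; simp only [hSdef, hS'def]; abel
  have hStend : Tendsto S atTop (𝓝 S') := by
    rw [← tendsto_sub_nhds_zero_iff]
    apply squeeze_zero_norm (fun n => ?_) htend0
    rw [hSsub n]
    exact I.opNorm_le _ (hFLmem n)
  have hSnorm'lt : ∀ n, I.norm' (S n) < min δ₁ 1 / 2 := by
    intro n
    have h1 : S n = (F n - L) + S' := by simp only [hSdef, hS'def]; abel
    have h2 := I.norm'_add_le (F n - L) (hFLmem n) S' hS'mem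
    rw [← h1] at h2
    have h3 : I.norm' (F n - L) < δ₀ := lt_of_lt_of_le (hclose' n) (min_le_left _ _)
    nlinarith [I.norm'_nonneg (S n) (hSmem n)]
  have hSnormlt : ∀ n, ‖S n‖ < 1 := by
    intro n
    have h1 := I.opNorm_le _ (hSmem n)
    have h2 := hSnorm'lt n
    nlinarith
  -- units and inverses
  have huS : ∀ n, IsUnit (1 - S n) := fun n => isUnit_one_sub_of_norm_lt_one (hSnormlt n)
  have huS' : IsUnit (1 - S') := isUnit_one_sub_of_norm_lt_one hS'norm
  set W : ℕ → X →L[ℂ] X := fun n => Ring.inverse (1 - S n) with hWdef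
  set W' : X →L[ℂ] X := Ring.inverse (1 - S') with hW'def
  have hWtend : Tendsto W atTop (𝓝 W') := by
    have h1 : Tendsto (fun n => 1 - S n) atTop (𝓝 (1 - S')) := tendsto_const_nhds.sub hStend
    have h2 : ContinuousAt Ring.inverse (1 - S' : X →L[ℂ] X) := by
      have := NormedRing.inverse_continuousAt huS'.unit
      rwa [huS'.unit_spec] at this
    exact h2.tendsto.comp h1
  -- M n
  set M : ℕ → X →L[ℂ] X := fun n => W n * F₀ with hMdef
  set M' : X →L[ℂ] X := W' * F₀ with hM'def
  have hMfr : ∀ n, IsFiniteRank (M n) := by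
    intro n
    have := isFiniteRank_mul_mul hF₀fr (W n) 1
    rwa [mul_one] at this
  have hM'fr : IsFiniteRank M' := by
    have := isFiniteRank_mul_mul hF₀fr W' 1
    rwa [mul_one] at this
  have hMmem : ∀ n, M n ∈ I.carrier := fun n => I.finiteRank_mem _ (hMfr n)
  have hM'mem : M' ∈ I.carrier := I.finiteRank_mem _ hM'fr
  have hMtendnorm' : Tendsto (fun n => I.norm' (M n - M')) atTop (𝓝 0) := by
    have heq : ∀ n, M n - M' = (W n - W') * F₀ * 1 := by
      intro n; rw [mul_one, hMdef, hM'def]; noncomm_ring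
    apply squeeze_zero (fun n => I.norm'_nonneg _ (hsubmem (hMmem n) hM'mem))
      (g := fun n => ‖W n - W'‖ * I.norm' F₀ * ‖(1 : X →L[ℂ] X)‖)
    · intro n
      rw [heq n]
      exact I.mul_norm'_le F₀ hF₀mem (W n - W') 1
    · have h1 : Tendsto (fun n => ‖W n - W'‖) atTop (𝓝 0) := by
        have := (tendsto_sub_nhds_zero_iff.2 hWtend).norm
        simpa using this
      have h2 := (h1.mul_const (I.norm' F₀)).mul_const ‖(1 : X →L[ℂ] X)‖
      simpa using h2
  have hMtend : Tendsto M atTop (𝓝 M') := hWtend.mul tendsto_const_nhds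
  -- factorization identities
  have hSM : ∀ n, (1 - S n) * M n = F₀ := by
    intro n
    rw [hMdef, ← mul_assoc, Ring.mul_inverse_cancel _ (huS n), one_mul]
  have hSM' : (1 - S') * M' = F₀ := by
    rw [hM'def, ← mul_assoc, Ring.mul_inverse_cancel _ huS', one_mul]
  have hfacn : ∀ n, F n = S n + M n - S n * M n := by
    intro n
    have h2 : M n - S n * M n = F₀ := by
      have := hSM n
      rw [← this]; noncomm_ring
    have h3 : S n + F₀ = F n := by simp only [hSdef]; abel
    rw [add_sub_assoc, h2, h3]
  have hfac' : (1 - S') * (1 - M') = 1 - L := by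
    have h1 : (1 - S') * (1 - M') = (1 - S') - (1 - S') * M' := by noncomm_ring
    rw [h1, hSM']
    rw [hS'def]; abel
  -- rank one decomposition of F₀
  obtain ⟨d, y, φ, hτ⟩ := exists_fr_decomp hF₀fr
  set m : ℕ := ⌈p⌉₊ - 1 with hm
  -- the correction terms
  set E : ℕ → ℂ := fun n => ∑ k ∈ Finset.Icc 1 m,
      ((∑ j ∈ Finset.range k, ∑ i, φ i ((S n ^ (k - 1 - j)) ((F n ^ j) (y i))))
        - ∑ i, φ i ((1 : X →L[ℂ] X) ((M n ^ (k - 1) * W n) (y i)))) / (k : ℂ) with hE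
  set E' : ℂ := ∑ k ∈ Finset.Icc 1 m,
      ((∑ j ∈ Finset.range k, ∑ i, φ i ((S' ^ (k - 1 - j)) ((L ^ j) (y i))))
        - ∑ i, φ i ((1 : X →L[ℂ] X) ((M' ^ (k - 1) * W') (y i)))) / (k : ℂ) with hE'
  -- the master identity, in terms of E
  have hmaster : ∀ n, detp p (F n) = detp p (S n) * detp p (M n) * Complex.exp (E n) := by
    intro n
    rw [detp_master p (hSfr n) (hMfr n) (hfacn n)]
    congr 1
    rw [hE]
    refine congrArg Complex.exp (Finset.sum_congr rfl fun k hk => ?_)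
    have hk1 : 1 ≤ k := (Finset.mem_Icc.1 hk).1
    congr 1
    have hdiff : F n - S n = F₀ := by simp only [hSdef]; abel
    have h1 : trOn (F n ^ k) - trOn (S n ^ k)
        = ∑ j ∈ Finset.range k, ∑ i, φ i ((S n ^ (k - 1 - j)) ((F n ^ j) (y i))) := by
      rw [trOn_pow_sub_pow (hFfr n) (hSfr n) hdiff k]
      exact Finset.sum_congr rfl fun j _ => hτ (F n ^ j) (S n ^ (k - 1 - j))
    have h2 : trOn (M n ^ k) = ∑ i, φ i ((1 : X →L[ℂ] X) ((M n ^ (k - 1) * W n) (y i))) := by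
      have hop : M n ^ (k - 1) * W n * F₀ * 1 = M n ^ k := by
        have hkk : k - 1 + 1 = k := by omega
        calc M n ^ (k - 1) * W n * F₀ * 1 = M n ^ (k - 1) * (W n * F₀) := by
              rw [mul_one, mul_assoc]
          _ = M n ^ (k - 1) * M n := rfl
          _ = M n ^ k := by rw [← pow_succ, hkk]
      rw [← hop, hτ]
    rw [← h1, ← h2]
  -- convergence of the correction terms
  have hEtend : Tendsto E atTop (𝓝 E') := by
    apply tendsto_finset_sum
    intro k _
    apply Tendsto.div_const
    apply Tendsto.sub
    · apply tendsto_finset_sum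
      intro j _
      apply tendsto_finset_sum
      intro i _
      have h1 : Tendsto (fun n => (F n ^ j) (y i)) atTop (𝓝 ((L ^ j) (y i))) :=
        tendsto_apply₂ (hFtend.pow j) tendsto_const_nhds
      have h2 : Tendsto (fun n => (S n ^ (k - 1 - j)) ((F n ^ j) (y i)))
          atTop (𝓝 ((S' ^ (k - 1 - j)) ((L ^ j) (y i)))) :=
        tendsto_apply₂ (hStend.pow (k - 1 - j)) h1
      exact ((φ i).continuous.tendsto _).comp h2
    · apply tendsto_finset_sum
      intro i _
      have h1 : Tendsto (fun n => (M n ^ (k - 1) * W n)) atTop (𝓝 (M' ^ (k - 1) * W')) :=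
        (hMtend.pow (k - 1)).mul hWtend
      have h2 : Tendsto (fun n => (M n ^ (k - 1) * W n) (y i))
          atTop (𝓝 ((M' ^ (k - 1) * W') (y i))) :=
        tendsto_apply₂ h1 tendsto_const_nhds
      have h3 : Tendsto (fun n => (1 : X →L[ℂ] X) ((M n ^ (k - 1) * W n) (y i)))
          atTop (𝓝 ((1 : X →L[ℂ] X) ((M' ^ (k - 1) * W') (y i)))) :=
        tendsto_apply₂ tendsto_const_nhds h2
      exact ((φ i).continuous.tendsto _).comp h3
  -- passing to the limit in the master identity
  have hseq : (fun n => D (F n)) = fun n => D (S n) * D (M n) * Complex.exp (E n) := by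
    funext n
    rw [hDe _ (hFfr n), hDe _ (hSfr n), hDe _ (hMfr n), hmaster n]
  have hDLtend : Tendsto (fun n => D (F n)) atTop (𝓝 (D L)) := tendsto_D hDc hL hFmem htend0
  have hDRtend : Tendsto (fun n => D (S n) * D (M n) * Complex.exp (E n)) atTop
      (𝓝 (D S' * D M' * Complex.exp E')) := by
    have t1 : Tendsto (fun n => D (S n)) atTop (𝓝 (D S')) := by
      apply tendsto_D hDc hS'mem hSmem
      have heq : (fun n => I.norm' (S n - S')) = fun n => I.norm' (F n - L) := by
        funext n; rw [hSsub n]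
      rw [heq]; exact htend0
    have t2 : Tendsto (fun n => D (M n)) atTop (𝓝 (D M')) :=
      tendsto_D hDc hM'mem hMmem hMtendnorm'
    exact (t1.mul t2).mul ((Complex.continuous_exp.tendsto _).comp hEtend)
  have hDL : D L = D S' * D M' * Complex.exp E' := by
    rw [hseq] at hDLtend
    exact tendsto_nhds_unique hDLtend hDRtend
  -- D S' ≠ 0
  have hDS' : D S' ≠ 0 := by
    have h1 : I.norm' (S' - 0) < δ₁ := by
      rw [sub_zero]
      nlinarith
    have h2 := hδ₁ S' hS'mem h1
    rw [hD0] at h2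
    intro h0
    rw [h0] at h2
    norm_num at h2
  -- invertibility transfer
  have hWu : IsUnit W' := by
    rw [hW'def, Ring.inverse_of_isUnit huS']; exact Units.isUnit _
  have hunit_iff : IsUnit (1 - L) ↔ IsUnit (1 - M') := by
    constructor
    · intro h
      have h1 : W' * (1 - L) = 1 - M' := by
        rw [← hfac', ← mul_assoc]
        have hcan : W' * (1 - S') = 1 := Ring.inverse_mul_cancel _ huS'
        rw [hcan, one_mul]
      rw [← h1]
      exact hWu.mul h
    · intro h
      rw [← hfac']
      exact huS'.mul h
  -- conclusion
  have key : (D L = 0) ↔ (D M' = 0) := by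
    rw [hDL]
    simp [mul_eq_zero, hDS', Complex.exp_ne_zero]
  rw [key, hDe M' hM'fr, detp_eq_zero_iff]
  have h1 : detOneSub M' = 0 ↔ ¬ IsUnit (1 - M') := by
    rw [← detOneSub_ne_zero_iff hM'fr]
    exact not_not.symm
  rw [h1]
  exact not_congr hunit_iff.symm
end PDaux

/-- Let `I` be an `l_p`-ideal in `B(X)`, `A ∈ B(X)`, `K ∈ I`, and let
`D(z) = det_{p,I}(I - K (z-A)⁻¹)` be the perturbation determinant.  Then for `z ∈ ρ(A)`,
`D(z) = 0` if and only if `z ∈ σ(A+K)`. -/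
theorem perturbationDeterminant_eq_zero_iff (p : ℝ) (hp : 0 < p) (I : LpIdeal p X)
    (D : (X →L[ℂ] X) → ℂ) (hDc : IdealContinuous I D) (hDe : ExtendsDetp p D)
    (A K : X →L[ℂ] X) (hK : K ∈ I.carrier) :
    ∀ z ∈ resolventSet ℂ A,
      (D (K * resolvent A z) = 0 ↔ z ∈ spectrum ℂ (A + K)) := by
  intro z hz
  have hzu : IsUnit ((algebraMap ℂ (X →L[ℂ] X)) z - A) := spectrum.mem_resolventSet_iff.1 hz
  have hLmem : K * resolvent A z ∈ I.carrier := by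
    have := I.mul_mem K hK 1 (resolvent A z)
    rwa [one_mul] at this
  rw [PDaux.crux p I D hDc hDe hLmem]
  have hres : resolvent A z = ↑hzu.unit⁻¹ := spectrum.resolvent_eq hz
  have h2 : resolvent A z * ((algebraMap ℂ (X →L[ℂ] X)) z - A) = 1 := by
    rw [hres]
    exact hzu.val_inv_mul
  have hfac : (1 - K * resolvent A z) * ((algebraMap ℂ (X →L[ℂ] X)) z - A)
      = (algebraMap ℂ (X →L[ℂ] X)) z - (A + K) := by
    have h1 : (1 - K * resolvent A z) * ((algebraMap ℂ (X →L[ℂ] X)) z - A)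
        = ((algebraMap ℂ (X →L[ℂ] X)) z - A)
          - K * (resolvent A z * ((algebraMap ℂ (X →L[ℂ] X)) z - A)) := by
      noncomm_ring
    rw [h1, h2, mul_one]
    abel
  rw [spectrum.mem_iff]
  constructor
  · intro hnu hu2
    apply hnu
    have h3 : (1 - K * resolvent A z)
        = ((algebraMap ℂ (X →L[ℂ] X)) z - (A + K)) * ↑hzu.unit⁻¹ := by
      rw [← hfac, mul_assoc]
      have h4 : ((algebraMap ℂ (X →L[ℂ] X)) z - A) * ↑hzu.unit⁻¹ = 1 := hzu.mul_val_inv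
      rw [h4, mul_one]
    rw [h3]
    exact hu2.mul (Units.isUnit _)
  · intro hnspec hu3
    exact hnspec (hfac ▸ hu3.mul hzu)
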